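/- Let O be a discrete valuation ring and let R be a commutative O-algebra which is reduced and which is finite and flat as an O-module. Let I be an ideal of R such that the quotient ring R/I is flat as an O-module. Then R/I is reduced. -/

import Mathlib

open TensorProduct

/-- A commutative semisimple ring is reduced. -/
lemma aux_isReduced_of_isSemisimpleRing {A : Type*} [CommRing A] [IsSemisimpleRing A] :
    IsReduced A := by
  constructor
  rintro x ⟨n, hn⟩
  obtain ⟨e, he, hspan⟩ := IsSemisimpleRing.ideal_eq_span_idempotent (Ideal.span {x})
  have hemem : e ∈ Ideal.span {x} := by
    rw [hspan]; exact Ideal.mem_span_singleton_self e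
  obtain ⟨a, ha⟩ := Ideal.mem_span_singleton'.mp hemem
  have he0 : e = 0 := by
    have h1 : e ^ (n + 1) = e := he.pow_succ_eq n
    calc e = e ^ (n + 1) := h1.symm
      _ = (a * x) ^ (n + 1) := by rw [ha]
      _ = a ^ (n + 1) * (x * x ^ n) := by ring
      _ = 0 := by rw [hn, mul_zero, mul_zero]
  have hx : x ∈ Ideal.span ({e} : Set A) := hspan ▸ Ideal.mem_span_singleton_self x
  rw [he0, Ideal.span_singleton_eq_bot.mpr rfl] at hx
  exact (Submodule.mem_bot A).mp hx

/-- `K ⊗[O] R` is reduced when `R` is reduced and `K` is the fraction field. -/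
lemma aux_isReduced_baseChange {O : Type*} [CommRing O] [IsDomain O]
    {R : Type*} [CommRing R] [Algebra O R] [IsReduced R] :
    IsReduced ((FractionRing O) ⊗[O] R) := by
  letI : Algebra R ((FractionRing O) ⊗[O] R) := Algebra.TensorProduct.rightAlgebra
  haveI : IsScalarTower O R ((FractionRing O) ⊗[O] R) :=
    Algebra.TensorProduct.right_isScalarTower
  set S := nonZeroDivisors O
  have hlm : IsLocalizedModule S
      (IsScalarTower.toAlgHom O R ((FractionRing O) ⊗[O] R)).toLinearMap := by
    rw [isLocalizedModule_iff_isBaseChange S (FractionRing O)]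
    exact TensorProduct.isBaseChange O R (FractionRing O)
  have hloc : IsLocalization (Algebra.algebraMapSubmonoid R S) ((FractionRing O) ⊗[O] R) :=
    isLocalizedModule_iff_isLocalization.mp hlm
  have e := IsLocalization.algEquiv (Algebra.algebraMapSubmonoid R S)
    (Localization (Algebra.algebraMapSubmonoid R S)) ((FractionRing O) ⊗[O] R)
  exact isReduced_of_injective e.symm.toRingHom e.symm.injective

/-- **Lemma 2.11 (Lundell's Lemma 2.4).**
Let `O` be a discrete valuation ring and `R` a commutative `O`-algebra which is reduced
and finite flat as an `O`-module.  If `I` is an ideal of `R` such that `R/I` is flat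
over `O`, then `R/I` is reduced. -/
theorem stmt_1 {O : Type*} [CommRing O] [IsDomain O] [IsDiscreteValuationRing O]
    {R : Type*} [CommRing R] [Algebra O R] [IsReduced R]
    [Module.Finite O R] [Module.Flat O R]
    (I : Ideal R) (hflat : Module.Flat O (R ⧸ I)) :
    IsReduced (R ⧸ I) := by
  let K := FractionRing O
  -- `K ⊗[O] R` is reduced and artinian, hence semisimple
  have hred : IsReduced (K ⊗[O] R) := aux_isReduced_baseChange
  have hart : IsArtinianRing (K ⊗[O] R) := IsArtinianRing.of_finite K (K ⊗[O] R)
  have hss : IsSemisimpleRing (K ⊗[O] R) :=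
    IsArtinianRing.isSemisimpleRing_of_isReduced (K ⊗[O] R)
  -- its quotient `K ⊗[O] (R ⧸ I)` is semisimple, hence reduced
  have hsurj : Function.Surjective
      (Algebra.TensorProduct.map (AlgHom.id O K) (Ideal.Quotient.mkₐ O I)) := by
    have := TensorProduct.map_surjective
      (g := (AlgHom.id O K).toLinearMap) (g' := (Ideal.Quotient.mkₐ O I).toLinearMap)
      Function.surjective_id Ideal.Quotient.mk_surjective
    exact this
  have hss2 : IsSemisimpleRing (K ⊗[O] (R ⧸ I)) :=
    RingHom.isSemisimpleRing_of_surjective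
      (Algebra.TensorProduct.map (AlgHom.id O K) (Ideal.Quotient.mkₐ O I)).toRingHom hsurj
  have hred2 : IsReduced (K ⊗[O] (R ⧸ I)) := aux_isReduced_of_isSemisimpleRing
  -- `R ⧸ I` injects into `K ⊗[O] (R ⧸ I)` by flatness
  have hK : Function.Injective (Algebra.linearMap O K) := IsFractionRing.injective O K
  have h := Module.Flat.rTensor_preserves_injective_linearMap
    (M := R ⧸ I) (Algebra.linearMap O K) hK
  have hinj : Function.Injective
      (Algebra.TensorProduct.includeRight : (R ⧸ I) →ₐ[O] K ⊗[O] (R ⧸ I)) := by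
    intro x y hxy
    have h1 : (LinearMap.rTensor (R ⧸ I) (Algebra.linearMap O K)) ((1 : O) ⊗ₜ[O] x)
        = (LinearMap.rTensor (R ⧸ I) (Algebra.linearMap O K)) ((1 : O) ⊗ₜ[O] y) := by
      rw [LinearMap.rTensor_tmul, LinearMap.rTensor_tmul]
      simpa [Algebra.TensorProduct.includeRight_apply] using hxy
    have h2 := h h1
    have h3 := congrArg (TensorProduct.lid O (R ⧸ I)) h2
    simpa using h3
  exact isReduced_of_injective
    (Algebra.TensorProduct.includeRight : (R ⧸ I) →ₐ[O] K ⊗[O] (R ⧸ I)).toRingHom hinj
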